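/- If A and B are normal elements of a unital C*-algebra, then the Hausdorff distance between their spectra is at most ||A - B||. -/

import Mathlib

open scoped ENNReal NNReal Pointwise

lemma aux_isStarNormal_inv {𝒜 : Type*} [Ring 𝒜] [StarRing 𝒜] (u : 𝒜ˣ)
    (h : IsStarNormal (u : 𝒜)) : IsStarNormal ((↑u⁻¹ : 𝒜)) := by
  constructor
  have h1 : Commute (star (u : 𝒜)) (u : 𝒜) := h.star_comm_self
  have h2 : Commute ((star u : 𝒜ˣ) : 𝒜) ((u : 𝒜ˣ) : 𝒜) := h1
  have h3 := (h2.units_inv_right).units_inv_left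
  simpa using h3

lemma aux_isStarNormal_smul_sub {𝒜 : Type*} [NormedRing 𝒜] [StarRing 𝒜]
    [NormedAlgebra ℂ 𝒜] [StarModule ℂ 𝒜] (b : 𝒜) (hb : IsStarNormal b) (z : ℂ) :
    IsStarNormal (algebraMap ℂ 𝒜 z - b) := by
  have halg : ∀ w : ℂ, ∀ x : 𝒜, Commute (algebraMap ℂ 𝒜 w) x := fun w x => Algebra.commutes w x
  have k1 : Commute (algebraMap ℂ 𝒜 (star z)) (algebraMap ℂ 𝒜 z - b) := halg _ _
  have k2 : Commute (star b) (algebraMap ℂ 𝒜 z - b) :=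
    ((halg z (star b)).symm).sub_right hb.star_comm_self
  exact ⟨by rw [star_sub, ← algebraMap_star_comm]; exact k1.sub_left k2⟩

lemma aux_key {𝒜 : Type*} [NormedRing 𝒜] [StarRing 𝒜] [CStarRing 𝒜] [CompleteSpace 𝒜]
    [NormedAlgebra ℂ 𝒜] [StarModule ℂ 𝒜] [NormOneClass 𝒜]
    (a b : 𝒜) (ha : IsStarNormal a) (hb : IsStarNormal b) :
    ∀ z ∈ spectrum ℂ a, Metric.infDist z (spectrum ℂ b) ≤ ‖a - b‖ := by
  intro z hz
  by_contra hlt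
  push_neg at hlt
  set r := Metric.infDist z (spectrum ℂ b) with hr
  have hr0 : (0 : ℝ) < r := lt_of_le_of_lt (norm_nonneg _) hlt
  -- every point of spectrum b is at distance ≥ r from z
  have hdist : ∀ μ ∈ spectrum ℂ b, r ≤ ‖z - μ‖ := by
    intro μ hμ
    simpa [dist_eq_norm] using Metric.infDist_le_dist_of_mem (x := z) hμ
  -- z ∉ spectrum b
  have hzb : z ∉ spectrum ℂ b := by
    intro hmem
    have h0 := hdist z hmem
    simp only [sub_self, norm_zero] at h0
    linarith
  have hu : IsUnit (algebraMap ℂ 𝒜 z - b) := by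
    rw [spectrum.mem_iff, not_not] at hzb; exact hzb
  obtain ⟨u, huv⟩ := hu
  -- spectrum of u
  have hspecu : spectrum ℂ (u : 𝒜) = {z} - spectrum ℂ b := by
    rw [huv]; exact (spectrum.singleton_sub_eq b z).symm
  have hnormu : ∀ ν ∈ spectrum ℂ (u : 𝒜), r ≤ ‖ν‖ := by
    intro ν hν
    rw [hspecu] at hν
    obtain ⟨w, hw, μ, hμ, rfl⟩ := hν
    simp only [Set.mem_singleton_iff] at hw
    subst hw
    exact hdist μ hμ
  -- the inverse is normal
  have hnu : IsStarNormal (u : 𝒜) := huv ▸ aux_isStarNormal_smul_sub b hb z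
  have hnui : IsStarNormal ((↑u⁻¹ : 𝒜)) := aux_isStarNormal_inv u hnu
  -- spectral radius bound for the inverse
  have hspec_inv : spectrum ℂ ((↑u⁻¹ : 𝒜)) = (spectrum ℂ (u : 𝒜))⁻¹ :=
    (spectrum.map_inv u).symm
  have hrad : spectralRadius ℂ ((↑u⁻¹ : 𝒜)) ≤ ENNReal.ofReal r⁻¹ := by
    rw [spectralRadius]
    refine iSup₂_le fun ν hν => ?_
    rw [hspec_inv, Set.mem_inv] at hν
    have hν0 : ν ≠ 0 := by
      intro h0
      subst h0
      exact Units.zero_notMem_spectrum (R := ℂ) u (by simpa using hν)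
    have := hnormu ν⁻¹ hν
    rw [norm_inv] at this
    have h1 : ‖ν‖ ≤ r⁻¹ := by
      rw [le_inv_comm₀ (norm_pos_iff.mpr hν0) hr0]
      exact this
    calc (‖ν‖₊ : ℝ≥0∞) = ENNReal.ofReal ‖ν‖ := (ofReal_norm ν).symm
      _ ≤ ENNReal.ofReal r⁻¹ := ENNReal.ofReal_le_ofReal h1
  have hnorm_inv : ‖(↑u⁻¹ : 𝒜)‖ ≤ r⁻¹ := by
    letI : CStarAlgebra 𝒜 := {}
    have := (IsStarNormal.spectralRadius_eq_nnnorm ((↑u⁻¹ : 𝒜))).symm.le.trans hrad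
    rw [← ENNReal.ofReal_le_ofReal_iff (by positivity)]
    calc ENNReal.ofReal ‖(↑u⁻¹ : 𝒜)‖ = (‖(↑u⁻¹ : 𝒜)‖₊ : ℝ≥0∞) := ofReal_norm _
      _ ≤ ENNReal.ofReal r⁻¹ := this
  -- now build inverse of algebraMap z - a
  set t : 𝒜 := (↑u⁻¹ : 𝒜) * (a - b) with ht
  have htn : ‖t‖ < 1 := by
    calc ‖t‖ ≤ ‖(↑u⁻¹ : 𝒜)‖ * ‖a - b‖ := norm_mul_le _ _
      _ ≤ r⁻¹ * ‖a - b‖ := by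
          apply mul_le_mul_of_nonneg_right hnorm_inv (norm_nonneg _)
      _ < r⁻¹ * r := by
          apply mul_lt_mul_of_pos_left hlt (by positivity)
      _ = 1 := inv_mul_cancel₀ (ne_of_gt hr0)
  have hone : IsUnit ((1 : 𝒜) - t) := (Units.oneSub t htn).isUnit
  have hfac : (u : 𝒜) * ((1 : 𝒜) - t) = algebraMap ℂ 𝒜 z - a := by
    rw [ht, mul_sub, mul_one, ← mul_assoc, Units.mul_inv, one_mul, huv]
    abel
  have : IsUnit (algebraMap ℂ 𝒜 z - a) := hfac ▸ u.isUnit.mul hone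
  rw [spectrum.mem_iff] at hz
  exact hz this

/-- If `a` and `b` are normal elements of a unital C*-algebra, then the Hausdorff distance
between their spectra is at most `‖a - b‖`. -/
theorem stmt_1 {𝒜 : Type*} [NormedRing 𝒜] [StarRing 𝒜] [CStarRing 𝒜] [CompleteSpace 𝒜]
    [NormedAlgebra ℂ 𝒜] [StarModule ℂ 𝒜] [NormOneClass 𝒜]
    (a b : 𝒜) (ha : IsStarNormal a) (hb : IsStarNormal b) :
    Metric.hausdorffDist (spectrum ℂ a) (spectrum ℂ b) ≤ ‖a - b‖ := by
  refine Metric.hausdorffDist_le_of_infDist (norm_nonneg _)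
    (aux_key a b ha hb) (fun z hz => ?_)
  rw [← norm_neg, neg_sub]
  exact aux_key b a hb ha z hz
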